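/- Let 2 ≤ g₁ < g₂ < … < g_e be coprime positive integers forming a minimal generating system of the numerical semigroup S = ⟨g₁,…,g_e⟩, let F be its Frobenius number, n = |S ∩ [0, F]|, q = ⌈(F+1)/g₁⌉, and let t = |PF(S)| be the type of S, where PF(S) = {x ∈ ℤ ∖ S : x + s ∈ S for every s ∈ S ∖ {0}}. Then t ≤ (e − 2)·(n − q + 1) + 2. -/

import Mathlib

/-- **Theorem 3 (bound on the type, sharp form).**
Let `2 ≤ g₁ < g₂ < … < g_e` be coprime positive integers forming a minimal generating
system of the numerical semigroup `S = ⟨g₁,…,g_e⟩`, let `F = max (ℤ \ S)` be the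
Frobenius number, `n = |S ∩ [0, F]|`, `q = ⌈(F+1)/g₁⌉`, and let `t = |PF(S)|` be the
type of `S`, where `PF(S) = {x ∈ ℤ \ S : x + s ∈ S for every s ∈ S \ {0}}`.
Then `t ≤ (e − 2)·(n − q + 1) + 2`. -/
theorem type_bound_q
    (e : ℕ) (he : 2 ≤ e) (g : Fin e → ℤ)
    (hg2 : 2 ≤ g ⟨0, by omega⟩)
    (hmono : StrictMono g)
    (hcop : Finset.univ.gcd g = 1)
    (S : Set ℤ)
    (hS : S = {x : ℤ | ∃ a : Fin e → ℕ, x = ∑ i, (a i : ℤ) * g i})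
    (hmingen : ∀ i : Fin e, ¬∃ a : Fin e → ℕ, a i = 0 ∧ g i = ∑ j, (a j : ℤ) * g j)
    (F : ℤ) (hF : F ∉ S) (hFmax : ∀ x : ℤ, x ∉ S → x ≤ F)
    (n : ℕ) (hn : n = (S ∩ Set.Icc 0 F).ncard)
    (q : ℤ) (hq : q = ⌈((F : ℚ) + 1) / ((g ⟨0, by omega⟩ : ℤ) : ℚ)⌉)
    (PF : Set ℤ) (hPF : PF = {x : ℤ | x ∉ S ∧ ∀ s ∈ S, s ≠ 0 → x + s ∈ S})
    (t : ℕ) (ht : t = PF.ncard) :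
    (t : ℤ) ≤ ((e : ℤ) - 2) * ((n : ℤ) - q + 1) + 2 := by
  classical
  have he0 : 0 < e := by omega
  set i0 : Fin e := ⟨0, he0⟩ with hi0
  set m : ℤ := g i0 with hm
  have hm2 : 2 ≤ m := hg2
  have hg_ge : ∀ i : Fin e, m ≤ g i := by
    intro i
    exact hmono.monotone (by simp [hi0, Fin.le_def])
  -- basic facts about S
  have hS0 : (0:ℤ) ∈ S := by
    rw [hS]; exact ⟨fun _ => 0, by simp⟩
  have hSnn : ∀ x ∈ S, (0:ℤ) ≤ x := by
    intro x hx
    rw [hS] at hx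
    obtain ⟨a, rfl⟩ := hx
    apply Finset.sum_nonneg
    intro i _
    have h1 : (0:ℤ) ≤ (a i : ℤ) := Int.natCast_nonneg _
    have h2 : (0:ℤ) ≤ g i := by have := hg_ge i; omega
    exact mul_nonneg h1 h2
  have hgS : ∀ i : Fin e, g i ∈ S := by
    intro i
    rw [hS]
    refine ⟨fun j => if j = i then 1 else 0, ?_⟩
    simp [apply_ite (Nat.cast : ℕ → ℤ), ite_mul]
  have hSadd : ∀ x ∈ S, ∀ y ∈ S, x + y ∈ S := by
    intro x hx y hy
    rw [hS] at hx hy ⊢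
    obtain ⟨a, rfl⟩ := hx
    obtain ⟨b, rfl⟩ := hy
    refine ⟨fun i => a i + b i, ?_⟩
    rw [← Finset.sum_add_distrib]
    apply Finset.sum_congr rfl
    intro i _
    push_cast
    ring
  have hmulS : ∀ k : ℕ, (k:ℤ) * m ∈ S := by
    intro k
    rw [hS]
    refine ⟨fun j => if j = i0 then k else 0, ?_⟩
    simp [apply_ite (Nat.cast : ℕ → ℤ), ite_mul]
    exact Or.inl hm
  have hSlb : ∀ x ∈ S, x ≠ 0 → m ≤ x := by
    intro x hx hx0
    rw [hS] at hx
    obtain ⟨a, rfl⟩ := hx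
    by_cases hall : ∀ i, a i = 0
    · exfalso; apply hx0; simp [hall]
    · push_neg at hall
      obtain ⟨i, hi⟩ := hall
      have h1 : g i ≤ (a i : ℤ) * g i := by
        have : (1:ℤ) ≤ (a i : ℤ) := by exact_mod_cast Nat.one_le_iff_ne_zero.mpr hi
        nlinarith [hg_ge i, hm2]
      have h2 : (a i : ℤ) * g i ≤ ∑ j, (a j : ℤ) * g j := by
        apply Finset.single_le_sum (f := fun j => (a j : ℤ) * g j) _ (Finset.mem_univ i)
        intro j _
        have := hg_ge j
        have : (0:ℤ) ≤ g j := by omega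
        positivity
      have := hg_ge i
      omega
  have h1S : (1:ℤ) ∉ S := by
    intro h
    have := hSlb 1 h one_ne_zero
    omega
  have hF1 : 1 ≤ F := hFmax 1 h1S
  -- bounds for q
  have hmQ : (0:ℚ) < (m:ℚ) := by exact_mod_cast (by omega : (0:ℤ) < m)
  have hq2 : F + 1 ≤ q * m := by
    have h := Int.le_ceil (((F:ℚ)+1)/(m:ℚ))
    rw [← hq] at h
    rw [div_le_iff₀ hmQ] at h
    exact_mod_cast h
  have hq1 : (q-1) * m ≤ F := by
    have h0 : q - 1 < ⌈((F:ℚ)+1)/(m:ℚ)⌉ := by rw [← hq]; omega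
    have h := Int.lt_ceil.mp h0
    rw [lt_div_iff₀ hmQ] at h
    have hZ : (q-1) * m < F + 1 := by exact_mod_cast h
    omega
  have hq0 : 1 ≤ q := by
    by_contra hqc
    push_neg at hqc
    have : q * m ≤ 0 := by
      have hq' : q ≤ 0 := by omega
      have := mul_le_mul_of_nonneg_right hq' (by omega : (0:ℤ) ≤ m)
      simpa using this
    omega
  -- the Apery set
  set Ap : Set ℤ := {x | x ∈ S ∧ x - m ∉ S} with hApdef
  have hApF : ∀ x ∈ Ap, x ≤ F + m := by
    intro x hx
    have := hFmax _ hx.2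
    omega
  have hApnn : ∀ x ∈ Ap, 0 ≤ x := fun x hx => hSnn x hx.1
  have hApfin : Ap.Finite := by
    apply Set.Finite.subset (Set.finite_Icc 0 (F+m))
    intro x hx
    exact Set.mem_Icc.mpr ⟨hApnn x hx, hApF x hx⟩
  have h0Ap : (0:ℤ) ∈ Ap := by
    refine ⟨hS0, fun h => ?_⟩
    have := hSnn _ h
    omega
  -- parent existence
  have hparent : ∀ w ∈ Ap, w ≠ 0 → ∃ v, v ∈ Ap ∧ ∃ j : Fin e, j ≠ i0 ∧ w = v + g j := by
    intro w hw hw0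
    have hwS := hw.1
    rw [hS] at hwS
    obtain ⟨a, ha⟩ := hwS
    by_cases hall : ∀ j : Fin e, j ≠ i0 → a j = 0
    · exfalso
      have hw' : w = (a i0 : ℤ) * m := by
        rw [ha, Finset.sum_eq_single i0]
        · intro j _ hj
          simp [hall j hj]
        · intro h
          exact absurd (Finset.mem_univ i0) h
      have hai : a i0 ≠ 0 := by
        intro h
        apply hw0
        rw [hw', h]
        simp
      apply hw.2
      have h1 : 1 ≤ a i0 := Nat.one_le_iff_ne_zero.mpr hai
      have heq : w - m = ((a i0 - 1 : ℕ) : ℤ) * m := by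
        rw [hw']
        push_cast [h1]
        ring
      rw [heq]
      exact hmulS _
    · push_neg at hall
      obtain ⟨j, hj0, haj⟩ := hall
      have h1 : 1 ≤ a j := Nat.one_le_iff_ne_zero.mpr haj
      have hvS : w - g j ∈ S := by
        rw [hS]
        refine ⟨Function.update a j (a j - 1), ?_⟩
        have key : ∀ i : Fin e, (a i : ℤ) * g i
            = ((Function.update a j (a j - 1) i : ℕ):ℤ) * g i + (if i = j then g j else 0) := by
          intro i
          rcases eq_or_ne i j with rfl | h
          · simp only [Function.update_self, if_pos rfl]
            push_cast [h1]
            ring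
          · simp [Function.update_of_ne h, h]
        have hsum : ∑ i, (a i : ℤ) * g i
            = (∑ i, ((Function.update a j (a j - 1) i : ℕ):ℤ) * g i) + g j := by
          rw [Finset.sum_congr rfl (fun i _ => key i), Finset.sum_add_distrib]
          congr 1
          rw [Finset.sum_ite_eq' Finset.univ j (fun _ => g j)]
          simp
        rw [ha] at *
        omega
      refine ⟨w - g j, ⟨hvS, ?_⟩, j, hj0, by ring⟩
      intro hc
      apply hw.2
      have heq : w - m = (w - g j - m) + g j := by ring
      rw [heq]
      exact hSadd _ hc _ (hgS j)
  -- choose a total parent function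
  have hPex : ∀ w : ℤ, ∃ p : ℤ × Fin e,
      (w ∈ Ap ∧ w ≠ 0) → p.1 ∈ Ap ∧ p.2 ≠ i0 ∧ w = p.1 + g p.2 := by
    intro w
    by_cases h : w ∈ Ap ∧ w ≠ 0
    · obtain ⟨v, hv, j, hj, hw⟩ := hparent w h.1 h.2
      exact ⟨(v, j), fun _ => ⟨hv, hj, hw⟩⟩
    · exact ⟨(0, i0), fun hc => absurd hc h⟩
  choose P hP using hPex
  -- Finsets
  set ApF : Finset ℤ := hApfin.toFinset with hApFdef
  set D : Finset ℤ := ApF.erase 0 with hDdef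
  have hDmem : ∀ w ∈ D, w ∈ Ap ∧ w ≠ 0 := by
    intro w hw
    exact ⟨hApfin.mem_toFinset.mp (Finset.mem_of_mem_erase hw), Finset.ne_of_mem_erase hw⟩
  set IntF : Finset ℤ := D.image (fun w => (P w).1) with hIntFdef
  have hcard1 : D.card ≤ (e-1) * IntF.card := by
    apply Finset.card_le_mul_card_image
    intro v hv
    have hsub : (D.filter (fun w => (P w).1 = v))
        ⊆ (Finset.univ.erase i0).image (fun j : Fin e => v + g j) := by
      intro w hw
      rw [Finset.mem_filter] at hw
      obtain ⟨hwD, hwv⟩ := hw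
      have h := hP w (hDmem w hwD)
      refine Finset.mem_image.mpr ⟨(P w).2, Finset.mem_erase.mpr ⟨h.2.1, Finset.mem_univ _⟩, ?_⟩
      rw [← hwv]
      exact h.2.2.symm
    calc (D.filter (fun w => (P w).1 = v)).card
        ≤ ((Finset.univ.erase i0).image (fun j : Fin e => v + g j)).card :=
          Finset.card_le_card hsub
      _ ≤ (Finset.univ.erase i0).card := Finset.card_image_le
      _ = e - 1 := by
          rw [Finset.card_erase_of_mem (Finset.mem_univ _), Finset.card_univ, Fintype.card_fin]
  -- maximal elements
  set Mx : Set ℤ := {x | x ∈ Ap ∧ ∀ j : Fin e, j ≠ i0 → x + g j ∉ Ap} with hMxdef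
  have hMfin : Mx.Finite := hApfin.subset (fun x hx => hx.1)
  set MF : Finset ℤ := hMfin.toFinset with hMFdef
  have hdisj : Disjoint MF IntF := by
    rw [Finset.disjoint_left]
    intro v hvM hvI
    obtain ⟨w, hwD, hwv⟩ := Finset.mem_image.mp hvI
    have h := hP w (hDmem w hwD)
    have hvMx := hMfin.mem_toFinset.mp hvM
    apply hvMx.2 (P w).2 h.2.1
    have heq : v + g (P w).2 = w := by rw [← hwv]; exact h.2.2.symm
    rw [heq]
    exact (hDmem w hwD).1
  have hsubAp : MF ∪ IntF ⊆ ApF := by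
    intro x hx
    rcases Finset.mem_union.mp hx with h | h
    · exact hApfin.mem_toFinset.mpr (hMfin.mem_toFinset.mp h).1
    · obtain ⟨w, hwD, hwv⟩ := Finset.mem_image.mp h
      exact hApfin.mem_toFinset.mpr (hwv ▸ (hP w (hDmem w hwD)).1)
  have hcard2 : MF.card + IntF.card ≤ ApF.card := by
    rw [← Finset.card_union_of_disjoint hdisj]
    exact Finset.card_le_card hsubAp
  have hcard3 : ApF.card = D.card + 1 := by
    have h0 : (0:ℤ) ∈ ApF := hApfin.mem_toFinset.mpr h0Ap
    have h1 : D.card = ApF.card - 1 := Finset.card_erase_of_mem h0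
    have h2 : 1 ≤ ApF.card := Finset.card_pos.mpr ⟨0, h0⟩
    omega
  -- t ≤ |MF|
  have htM : t ≤ MF.card := by
    rw [ht]
    have himg : (fun x => x + m) '' PF ⊆ Mx := by
      rintro _ ⟨x, hx, rfl⟩
      rw [hPF] at hx
      obtain ⟨hxS, hxadd⟩ := hx
      have hmS : m ∈ S := hgS i0
      have hmne : m ≠ 0 := by omega
      refine ⟨⟨hxadd m hmS hmne, by simpa using hxS⟩, ?_⟩
      intro j hj hc
      apply hc.2
      have heq : x + m + g j - m = x + g j := by ring
      rw [heq]
      refine hxadd (g j) (hgS j) ?_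
      have := hg_ge j
      omega
    calc PF.ncard = ((fun x => x + m) '' PF).ncard :=
          (Set.ncard_image_of_injective _ (add_left_injective m)).symm
      _ ≤ Mx.ncard := Set.ncard_le_ncard himg hMfin
      _ = MF.card := Set.ncard_eq_toFinset_card _ hMfin
  -- multiples of m in [0,F]
  set MultF : Finset ℤ := (Finset.Icc (0:ℤ) (q-1)).image (fun k => k * m) with hMultdef
  have hminj : Function.Injective (fun k : ℤ => k * m) := fun a b hab => by
    exact mul_right_cancel₀ (by omega : m ≠ 0) hab
  have hMultcard : MultF.card = q.toNat := by
    rw [Finset.card_image_of_injective _ hminj, Int.card_Icc]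
    simp
  have hSFfin : (S ∩ Set.Icc 0 F).Finite :=
    (Set.finite_Icc (0:ℤ) F).subset Set.inter_subset_right
  set SF : Finset ℤ := hSFfin.toFinset with hSFdef
  have hnSF : n = SF.card := by
    rw [hn]
    exact Set.ncard_eq_toFinset_card _ hSFfin
  have hMultsub : MultF ⊆ SF := by
    intro x hx
    obtain ⟨k, hk, rfl⟩ := Finset.mem_image.mp hx
    rw [Finset.mem_Icc] at hk
    refine hSFfin.mem_toFinset.mpr ⟨?_, Set.mem_Icc.mpr ⟨?_, ?_⟩⟩
    · have heq : (k.toNat : ℤ) * m = k * m := by rw [Int.toNat_of_nonneg hk.1]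
      rw [← heq]
      exact hmulS _
    · exact mul_nonneg hk.1 (by omega)
    · calc k * m ≤ (q-1) * m := mul_le_mul_of_nonneg_right hk.2 (by omega)
        _ ≤ F := hq1
  set TF : Finset ℤ := SF \ MultF with hTFdef
  have hTcard : (TF.card : ℤ) = (n:ℤ) - q := by
    have h1 : TF.card = SF.card - MultF.card := Finset.card_sdiff_of_subset hMultsub
    have hle : MultF.card ≤ SF.card := Finset.card_le_card hMultsub
    have h2 : (q.toNat : ℤ) = q := Int.toNat_of_nonneg (by omega)
    rw [h1, Nat.cast_sub hle, hMultcard, h2, hnSF]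
  have hIntT : IntF ⊆ insert 0 TF := by
    intro v hv
    obtain ⟨w, hwD, hwv⟩ := Finset.mem_image.mp hv
    have h := hP w (hDmem w hwD)
    have hvAp : v ∈ Ap := hwv ▸ h.1
    have hgj : m + 1 ≤ g (P w).2 := by
      have hlt : i0 < (P w).2 := by
        refine lt_of_le_of_ne ?_ (Ne.symm h.2.1)
        simp [hi0, Fin.le_def]
      have := hmono hlt
      omega
    have hvF : v ≤ F := by
      have hwub := hApF w (hDmem w hwD).1
      have hweq : w = v + g (P w).2 := by rw [← hwv]; exact h.2.2
      omega
    rcases eq_or_ne v 0 with rfl | hv0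
    · exact Finset.mem_insert_self _ _
    · apply Finset.mem_insert_of_mem
      rw [Finset.mem_sdiff]
      refine ⟨hSFfin.mem_toFinset.mpr ⟨hvAp.1, Set.mem_Icc.mpr ⟨hSnn _ hvAp.1, hvF⟩⟩, ?_⟩
      intro hc
      obtain ⟨k, hk, hkv⟩ := Finset.mem_image.mp hc
      rw [Finset.mem_Icc] at hk
      apply hvAp.2
      have hk1 : 1 ≤ k := by
        rcases eq_or_lt_of_le hk.1 with h' | h'
        · exfalso; apply hv0; rw [← hkv, ← h']; ring
        · omega
      have heq : v - m = (((k-1).toNat : ℤ)) * m := by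
        rw [Int.toNat_of_nonneg (by omega), ← hkv]
        ring
      rw [heq]
      exact hmulS _
  have hIcard : (IntF.card : ℤ) ≤ ((n:ℤ) - q) + 1 := by
    have h1 : IntF.card ≤ (insert (0:ℤ) TF).card := Finset.card_le_card hIntT
    have h2 : (insert (0:ℤ) TF).card ≤ TF.card + 1 := Finset.card_insert_le _ _
    have h3 : (IntF.card : ℤ) ≤ (TF.card : ℤ) + 1 := by exact_mod_cast le_trans h1 h2
    omega
  -- final arithmetic
  have he2 : (0:ℤ) ≤ (e:ℤ) - 2 := by
    have : (2:ℤ) ≤ (e:ℤ) := by exact_mod_cast he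
    omega
  have hM : (MF.card : ℤ) ≤ ((e:ℤ) - 2) * IntF.card + 1 := by
    have h1 : (MF.card:ℤ) + IntF.card ≤ (ApF.card:ℤ) := by exact_mod_cast hcard2
    have h2 : (ApF.card:ℤ) = (D.card:ℤ) + 1 := by exact_mod_cast hcard3
    have h3 : (D.card:ℤ) ≤ ((e:ℤ)-1) * IntF.card := by
      have := hcard1
      have hcast : ((e-1 : ℕ) : ℤ) = (e:ℤ) - 1 := by
        rw [Nat.cast_sub (by omega : 1 ≤ e)]
        simp
      calc (D.card:ℤ) ≤ (((e-1) * IntF.card : ℕ) : ℤ) := by exact_mod_cast this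
        _ = ((e:ℤ)-1) * IntF.card := by push_cast [hcast]; ring
    linarith
  have htM' : (t:ℤ) ≤ (MF.card:ℤ) := by exact_mod_cast htM
  have hmul := mul_le_mul_of_nonneg_left
    (show (IntF.card:ℤ) ≤ (n:ℤ) - q + 1 by linarith) he2
  linarith
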